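/- arXiv:1005.1631 — 2 statements merged into one kernel-verified Lean document; each statement's English description precedes it below -/
import Mathlib

section
/- For every n ≥ 1, the cyclohedron γ-polynomials D_n(τ) = Σ_{i=0}^{⌊n/2⌋} (n!/(i!·i!·(n−2i)!))·τ^i satisfy the recurrence D_n(τ) = D_{n-1}(τ) + 2τ·Σ_{i=1}^{n-1} Γ_{i-1}(τ)·D_{n-i-1}(τ), where Γ_m(τ) = Σ_{i=0}^{⌊m/2⌋} (1/(i+1))·binom(2i,i)·binom(m,2i)·τ^i is the associahedron γ-polynomial, and D_0 = Γ_0 = 1. -/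
open Finset Polynomial

/-- The γ-polynomial of the associahedron `As^m`:
`Γ_m(τ) = Σ_{i=0}^{⌊m/2⌋} (1/(i+1))·binom(2i,i)·binom(m,2i)·τ^i`. -/
noncomputable def gammaAs (m : ℕ) : Polynomial ℚ :=
  ∑ i ∈ Finset.range (m / 2 + 1),
    Polynomial.C ((1 / (i + 1 : ℚ)) * ((2 * i).choose i) * (m.choose (2 * i))) *
      Polynomial.X ^ i

/-- The γ-polynomial of the cyclohedron `Cy^n`:
`D_n(τ) = Σ_{i=0}^{⌊n/2⌋} (n!/(i!·i!·(n−2i)!))·τ^i`. -/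
noncomputable def gammaCy (n : ℕ) : Polynomial ℚ :=
  ∑ i ∈ Finset.range (n / 2 + 1),
    Polynomial.C ((n.factorial : ℚ) /
      ((i.factorial : ℚ) * (i.factorial : ℚ) * ((n - 2 * i).factorial : ℚ))) *
      Polynomial.X ^ i


/-- Vandermonde hockey-stick. -/
lemma vh (r : ℕ) : ∀ (N s : ℕ),
    ∑ m ∈ range (N + 1), m.choose r * (N - m).choose s = (N + 1).choose (r + s + 1) := by
  intro N
  induction N with
  | zero =>
    intro s
    cases r <;> cases s <;> simp [Nat.choose]
  | succ N ih =>
    intro s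
    rw [Finset.sum_range_succ]
    cases s with
    | zero =>
      simp only [Nat.choose_zero_right, mul_one, Nat.sub_self]
      have h0 : ∑ m ∈ range (N + 1), m.choose r * (N + 1 - m).choose 0 =
          ∑ m ∈ range (N + 1), m.choose r * (N - m).choose 0 := by
        apply Finset.sum_congr rfl; intro m _; simp
      have h1 : ∑ x ∈ range (N + 1 + 1), x.choose r = (N + 1 + 1).choose (r + 1) := by
        rw [← Nat.sum_Icc_choose]
        refine (Finset.sum_subset ?_ ?_).symm
        · intro x hx
          simp only [Finset.mem_Icc] at hx
          simp only [Finset.mem_range]; omega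
        · intro x hx hx2
          simp only [Finset.mem_range] at hx
          simp only [Finset.mem_Icc] at hx2
          exact Nat.choose_eq_zero_of_lt (by omega)
      rw [Finset.sum_range_succ] at h1
      simp only [Nat.choose_zero_right, mul_one, Nat.add_zero] at h1 ⊢
      omega
    | succ t =>
      have h0 : ∑ m ∈ range (N + 1), m.choose r * (N + 1 - m).choose (t + 1) =
          ∑ m ∈ range (N + 1), (m.choose r * (N - m).choose t +
            m.choose r * (N - m).choose (t + 1)) := by
        apply Finset.sum_congr rfl
        intro m hm
        have hm' : m ≤ N := by simpa [Nat.lt_succ_iff] using hm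
        have : N + 1 - m = (N - m) + 1 := by omega
        rw [this, Nat.choose_succ_succ, mul_add]
      rw [h0, Finset.sum_add_distrib, ih t, ih (t + 1)]
      rw [Nat.sub_self]
      have : Nat.choose 0 (t + 1) = 0 := by simp
      rw [this, mul_zero, add_zero, Nat.choose_succ_succ (N + 1) (r + (t + 1))]
      have e1 : r + t + 1 = r + (t + 1) := by ring
      rw [e1]


noncomputable def cbQ (n : ℕ) : ℚ := (Nat.centralBinom n : ℚ)
noncomputable def Ssum (n : ℕ) : ℚ := ∑ k ∈ range (n + 1), cbQ k * cbQ (n - k)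
noncomputable def Msum (n : ℕ) : ℚ := ∑ k ∈ range (n + 1), (k : ℚ) * (cbQ k * cbQ (n - k))
noncomputable def Tsum (n : ℕ) : ℚ := ∑ a ∈ range (n + 1), (catalan a : ℚ) * cbQ (n - a)
noncomputable def Usum (n : ℕ) : ℚ :=
  ∑ a ∈ range (n + 1), (a : ℚ) * ((catalan a : ℚ) * cbQ (n - a))
noncomputable def Vsum (n : ℕ) : ℚ :=
  ∑ a ∈ range (n + 1), ((n - a : ℕ) : ℚ) * ((catalan a : ℚ) * cbQ (n - a))

lemma cb_rec (n : ℕ) : ((n : ℚ) + 1) * cbQ (n + 1) = (4 * n + 2) * cbQ n := by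
  have h := Nat.succ_mul_centralBinom_succ n
  have : ((n + 1) * Nat.centralBinom (n + 1) : ℚ) = (2 * (2 * n + 1) * Nat.centralBinom n : ℚ) :=
    by exact_mod_cast congrArg (Nat.cast : ℕ → ℚ) h
  push_cast at this
  unfold cbQ
  linarith

lemma M_eq (n : ℕ) : 2 * Msum n = n * Ssum n := by
  have h := Finset.sum_range_reflect (fun k => (k : ℚ) * (cbQ k * cbQ (n - k))) (n + 1)
  have h2 : Msum n = ∑ j ∈ range (n + 1), ((n - j : ℕ) : ℚ) * (cbQ (n - j) * cbQ j) := by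
    unfold Msum
    rw [← h]
    apply Finset.sum_congr rfl
    intro j hj
    have hj' : j ≤ n := by simpa [Nat.lt_succ_iff] using hj
    have e1 : n + 1 - 1 - j = n - j := by omega
    have e2 : n - (n - j) = j := by omega
    rw [e1, e2]
  have : Msum n + Msum n = n * Ssum n := by
    nth_rewrite 2 [h2]
    unfold Msum Ssum
    rw [← Finset.sum_add_distrib, Finset.mul_sum]
    apply Finset.sum_congr rfl
    intro j hj
    have hj' : j ≤ n := by simpa [Nat.lt_succ_iff] using hj
    have e : ((n - j : ℕ) : ℚ) = (n : ℚ) - j := by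
      push_cast [hj']; ring
    rw [e]
    ring
  linarith

lemma M_rec (n : ℕ) : Msum (n + 1) = 4 * Msum n + 2 * Ssum n := by
  unfold Msum Ssum
  rw [Finset.sum_range_succ']
  simp only [Nat.cast_zero, zero_mul, add_zero, Nat.cast_add, Nat.cast_one]
  rw [Finset.mul_sum, Finset.mul_sum, ← Finset.sum_add_distrib]
  apply Finset.sum_congr rfl
  intro i hi
  have e1 : n + 1 - (i + 1) = n - i := by omega
  rw [e1]
  have h := cb_rec i
  have : ((i : ℚ) + 1) * (cbQ (i + 1) * cbQ (n - i)) = ((4 * i + 2) * cbQ i) * cbQ (n - i) := by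
    rw [← h]; ring
  calc ((i : ℚ) + 1) * (cbQ (i + 1) * cbQ (n - i)) = ((4 * i + 2) * cbQ i) * cbQ (n - i) := this
    _ = 4 * ((i : ℚ) * (cbQ i * cbQ (n - i))) + 2 * (cbQ i * cbQ (n - i)) := by ring

lemma S_succ (n : ℕ) : Ssum (n + 1) = 4 * Ssum n := by
  have h1 := M_eq (n + 1)
  have h2 := M_rec n
  have h3 := M_eq n
  have hn : ((n : ℚ) + 1) ≠ 0 := by positivity
  have : ((n : ℚ) + 1) * Ssum (n + 1) = ((n : ℚ) + 1) * (4 * Ssum n) := by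
    push_cast at h1
    nlinarith [h1, h2, h3]
  exact mul_left_cancel₀ hn this

lemma S_eq (n : ℕ) : Ssum n = 4 ^ n := by
  induction n with
  | zero => simp [Ssum, cbQ, Nat.centralBinom]
  | succ n ih => rw [S_succ, ih]; ring

lemma TU (n : ℕ) : Usum n + Tsum n = Ssum n := by
  unfold Usum Tsum Ssum
  rw [← Finset.sum_add_distrib]
  apply Finset.sum_congr rfl
  intro a _
  have h : ((a + 1) * catalan a : ℚ) = (Nat.centralBinom a : ℚ) := by
    exact_mod_cast congrArg (Nat.cast : ℕ → ℚ) (succ_mul_catalan_eq_centralBinom a)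
  push_cast at h
  have : cbQ a = ((a : ℚ) + 1) * (catalan a : ℚ) := by unfold cbQ; linarith
  rw [this]; ring

lemma V_eq (n : ℕ) : Vsum n = n * Tsum n - Usum n := by
  unfold Vsum Tsum Usum
  rw [Finset.mul_sum, ← Finset.sum_sub_distrib]
  apply Finset.sum_congr rfl
  intro a ha
  have ha' : a ≤ n := by simpa [Nat.lt_succ_iff] using ha
  have e : ((n - a : ℕ) : ℚ) = (n : ℚ) - a := by push_cast [ha']; ring
  rw [e]; ring

lemma V_rec (n : ℕ) : Vsum (n + 1) = 4 * Vsum n + 2 * Tsum n := by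
  unfold Vsum Tsum
  rw [Finset.sum_range_succ]
  have e0 : n + 1 - (n + 1) = 0 := by omega
  rw [e0]
  simp only [Nat.cast_zero, zero_mul, add_zero]
  rw [Finset.mul_sum, Finset.mul_sum, ← Finset.sum_add_distrib]
  apply Finset.sum_congr rfl
  intro a ha
  have ha' : a ≤ n := by simpa [Nat.lt_succ_iff] using ha
  have e1 : n + 1 - a = (n - a) + 1 := by omega
  rw [e1]
  have h := cb_rec (n - a)
  have e2 : (((n - a) + 1 : ℕ) : ℚ) = ((n - a : ℕ) : ℚ) + 1 := by push_cast; ring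
  rw [e2]
  have : (((n - a : ℕ) : ℚ) + 1) * ((catalan a : ℚ) * cbQ ((n - a) + 1)) =
      (catalan a : ℚ) * ((4 * ((n - a : ℕ) : ℚ) + 2) * cbQ (n - a)) := by
    rw [← h]; ring
  rw [this]; ring

lemma T_rec (n : ℕ) : ((n : ℚ) + 2) * Tsum (n + 1) = (4 * n + 6) * Tsum n := by
  have h1 := V_eq (n + 1)
  have h2 := V_rec n
  have h3 := V_eq n
  have h4 := TU (n + 1)
  have h5 := TU n
  have h6 := S_succ n
  push_cast at h1
  nlinarith [h1, h2, h3, h4, h5, h6]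

lemma T_eq (n : ℕ) : Tsum n = cbQ (n + 1) / 2 := by
  induction n with
  | zero =>
    simp [Tsum, cbQ, Nat.centralBinom]
  | succ n ih =>
    have h := T_rec n
    rw [ih] at h
    have hcb := cb_rec (n + 1)
    push_cast at hcb
    have hn : ((n : ℚ) + 2) ≠ 0 := by positivity
    have : ((n : ℚ) + 2) * Tsum (n + 1) = ((n : ℚ) + 2) * (cbQ (n + 2) / 2) := by
      rw [h]
      field_simp
      nlinarith [hcb]
    exact mul_left_cancel₀ hn this

lemma coeff_gammaAs (m a : ℕ) :
    (gammaAs m).coeff a = (catalan a : ℚ) * (m.choose (2 * a) : ℚ) := by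
  unfold gammaAs
  rw [Polynomial.finset_sum_coeff]
  simp only [Polynomial.coeff_C_mul, Polynomial.coeff_X_pow, mul_ite, mul_one, mul_zero]
  rw [Finset.sum_ite_eq (Finset.range (m / 2 + 1)) a
    (fun i => 1 / ((i : ℚ) + 1) * ((2 * i).choose i : ℚ) * (m.choose (2 * i) : ℚ))]
  by_cases h : a ∈ Finset.range (m / 2 + 1)
  · rw [if_pos h]
    have hc : ((a : ℚ) + 1) * (catalan a : ℚ) = ((2 * a).choose a : ℚ) := by
      have := congrArg (Nat.cast : ℕ → ℚ) (succ_mul_catalan_eq_centralBinom a)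
      rw [Nat.centralBinom_eq_two_mul_choose] at this
      push_cast at this
      linarith
    have ha1 : ((a : ℚ) + 1) ≠ 0 := by positivity
    field_simp
    linarith [mul_comm ((a : ℚ) + 1) ((catalan a : ℚ)),
      congrArg (fun x => x * (m.choose (2 * a) : ℚ)) hc]
  · rw [if_neg h]
    have hm : m < 2 * a := by
      simp only [Finset.mem_range] at h
      omega
    rw [Nat.choose_eq_zero_of_lt hm]
    simp

lemma coeff_gammaCy (n k : ℕ) :
    (gammaCy n).coeff k = (n.choose (2 * k) : ℚ) * ((2 * k).choose k : ℚ) := by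
  unfold gammaCy
  rw [Polynomial.finset_sum_coeff]
  simp only [Polynomial.coeff_C_mul, Polynomial.coeff_X_pow, mul_ite, mul_one, mul_zero]
  rw [Finset.sum_ite_eq (Finset.range (n / 2 + 1)) k
    (fun i => (n.factorial : ℚ) /
      ((i.factorial : ℚ) * (i.factorial : ℚ) * ((n - 2 * i).factorial : ℚ)))]
  by_cases h : k ∈ Finset.range (n / 2 + 1)
  · rw [if_pos h]
    have hk : 2 * k ≤ n := by
      simp only [Finset.mem_range] at h
      omega
    rw [Nat.cast_choose ℚ hk, Nat.cast_choose ℚ (show k ≤ 2 * k by omega)]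
    have e : 2 * k - k = k := by omega
    rw [e]
    have f1 : ((2 * k).factorial : ℚ) ≠ 0 := by positivity
    have f2 : (k.factorial : ℚ) ≠ 0 := by positivity
    have f3 : ((n - 2 * k).factorial : ℚ) ≠ 0 := by positivity
    field_simp
  · rw [if_neg h]
    have hm : n < 2 * k := by
      simp only [Finset.mem_range] at h
      omega
    rw [Nat.choose_eq_zero_of_lt hm]
    simp

theorem gammaCy_recurrence (n : ℕ) (hn : 1 ≤ n) :
    gammaCy n =
      gammaCy (n - 1) +
        2 * Polynomial.X *
          ∑ i ∈ Finset.Icc 1 (n - 1), gammaAs (i - 1) * gammaCy (n - i - 1) := by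
  rcases n with _ | _ | N
  · omega
  · have he : Finset.Icc 1 (1 - 1) = (∅ : Finset ℕ) := by decide
    rw [he, Finset.sum_empty, mul_zero, add_zero]
    apply Polynomial.ext
    intro k
    rw [coeff_gammaCy, coeff_gammaCy]
    cases k with
    | zero => norm_num
    | succ k =>
      have h1 : Nat.choose 1 (2 * (k + 1)) = 0 := Nat.choose_eq_zero_of_lt (by omega)
      have h0 : Nat.choose (1 - 1) (2 * (k + 1)) = 0 := Nat.choose_eq_zero_of_lt (by omega)
      rw [h1, h0]
  · rw [show N + 1 + 1 = N + 2 by omega]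
    simp only [show N + 2 - 1 = N + 1 from by omega]
    apply Polynomial.ext
    intro k
    rw [Polynomial.coeff_add, coeff_gammaCy, coeff_gammaCy]
    set Q := ∑ i ∈ Finset.Icc 1 (N + 1), gammaAs (i - 1) * gammaCy (N + 2 - i - 1) with hQdef
    cases k with
    | zero =>
      have h0 : (2 * Polynomial.X * Q).coeff 0 = 0 := by
        rw [Polynomial.mul_coeff_zero]
        simp
      rw [h0]
      norm_num
    | succ K =>
      -- coefficient of X * (2*Q)
      have hXQ : (2 * Polynomial.X * Q).coeff (K + 1) = 2 * Q.coeff K := by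
        have e : 2 * Polynomial.X * Q = Polynomial.X * (2 * Q) := by ring
        rw [e, Polynomial.coeff_X_mul]
        simp [two_mul]
      rw [hXQ]
      -- compute Q.coeff K
      have hQ : Q.coeff K = ((N + 1).choose (2 * K + 1) : ℚ) * Tsum K := by
        rw [hQdef, Polynomial.finset_sum_coeff]
        have step1 : ∀ i ∈ Finset.Icc 1 (N + 1),
            (gammaAs (i - 1) * gammaCy (N + 2 - i - 1)).coeff K =
            ∑ x ∈ Finset.HasAntidiagonal.antidiagonal K,
              (catalan x.1 : ℚ) * ((i - 1).choose (2 * x.1) : ℚ) *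
                (((N + 2 - i - 1).choose (2 * x.2) : ℚ) * ((2 * x.2).choose x.2 : ℚ)) := by
          intro i _
          rw [Polynomial.coeff_mul]
          apply Finset.sum_congr rfl
          intro x _
          rw [coeff_gammaAs, coeff_gammaCy]
        rw [Finset.sum_congr rfl step1, Finset.sum_comm]
        have step2 : ∀ x ∈ Finset.HasAntidiagonal.antidiagonal K,
            (∑ i ∈ Finset.Icc 1 (N + 1),
              (catalan x.1 : ℚ) * ((i - 1).choose (2 * x.1) : ℚ) *
                (((N + 2 - i - 1).choose (2 * x.2) : ℚ) * ((2 * x.2).choose x.2 : ℚ))) =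
            ((N + 1).choose (2 * K + 1) : ℚ) *
              ((catalan x.1 : ℚ) * ((2 * x.2).choose x.2 : ℚ)) := by
          intro x hx
          have hxK : x.1 + x.2 = K := Finset.HasAntidiagonal.mem_antidiagonal.mp hx
          rw [← Finset.Ico_add_one_right_eq_Icc, Finset.sum_Ico_eq_sum_range]
          have e1 : N + 1 + 1 - 1 = N + 1 := by omega
          rw [e1]
          have step3 : ∀ j ∈ Finset.range (N + 1),
              (catalan x.1 : ℚ) * ((1 + j - 1).choose (2 * x.1) : ℚ) *
                (((N + 2 - (1 + j) - 1).choose (2 * x.2) : ℚ) * ((2 * x.2).choose x.2 : ℚ)) =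
              ((catalan x.1 : ℚ) * ((2 * x.2).choose x.2 : ℚ)) *
                ((j.choose (2 * x.1) * (N - j).choose (2 * x.2) : ℕ) : ℚ) := by
            intro j _
            have e2 : 1 + j - 1 = j := by omega
            have e3 : N + 2 - (1 + j) - 1 = N - j := by omega
            rw [e2, e3]
            push_cast
            ring
          rw [Finset.sum_congr rfl step3, ← Finset.mul_sum, ← Nat.cast_sum, vh]
          have e4 : 2 * x.1 + 2 * x.2 + 1 = 2 * K + 1 := by omega
          rw [e4]
          ring
        rw [Finset.sum_congr rfl step2, ← Finset.mul_sum]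
        congr 1
        rw [Finset.Nat.sum_antidiagonal_eq_sum_range_succ_mk, Tsum]
        apply Finset.sum_congr rfl
        intro a _
        rw [cbQ, Nat.centralBinom_eq_two_mul_choose]
      rw [hQ, T_eq]
      -- final numeric identity
      have hp : (N + 2).choose (2 * K + 2) =
          (N + 1).choose (2 * K + 1) + (N + 1).choose (2 * K + 2) := Nat.choose_succ_succ _ _
      have e5 : 2 * (K + 1) = 2 * K + 2 := by ring
      rw [e5]
      rw [cbQ, Nat.centralBinom_eq_two_mul_choose, e5]
      have := congrArg (Nat.cast : ℕ → ℚ) hp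
      push_cast at this ⊢
      rw [this]
      ring
end

section
/- For all natural numbers n ≥ 1 and 1 ≤ i ≤ n: Σ_{k=i}^{n} binom(n,k)·A(k,i−1) ≤ A(n+1,i), where A(m,k) is the Eulerian number. -/
open Finset
open scoped Classical

/-- The number of descents of a permutation `σ` of `Fin m`. -/
noncomputable def numDescents (m : ℕ) (σ : Equiv.Perm (Fin m)) : ℕ :=
  ((Finset.range m).filter fun i =>
    ∃ h : i + 1 < m, σ ⟨i + 1, h⟩ < σ ⟨i, Nat.lt_of_succ_lt h⟩).card

/-- The Eulerian number `A(m,k)`: the number of permutations of `{1,…,m}` with exactly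
`k` descents. -/
noncomputable def eulerian (m k : ℕ) : ℕ :=
  ((Finset.univ : Finset (Equiv.Perm (Fin m))).filter fun σ => numDescents m σ = k).card


/-- `j`-th smallest element of `S`, with default `d`. -/
def nthF {n : ℕ} (S : Finset (Fin n)) (d : Fin n) (j : ℕ) : Fin n :=
  (S.sort (· ≤ ·)).getD j d

lemma nthF_mem {n : ℕ} {S : Finset (Fin n)} {d : Fin n} {j : ℕ} (h : j < S.card) :
    nthF S d j ∈ S := by
  have hl : j < (S.sort (· ≤ ·)).length := by rwa [Finset.length_sort]
  rw [nthF, List.getD_eq_getElem _ _ hl]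
  exact (Finset.mem_sort _).1 (List.getElem_mem _)

lemma nthF_strictMono {n : ℕ} {S : Finset (Fin n)} {d : Fin n} {j1 j2 : ℕ}
    (h : j1 < j2) (h2 : j2 < S.card) : nthF S d j1 < nthF S d j2 := by
  have hl2 : j2 < (S.sort (· ≤ ·)).length := by rwa [Finset.length_sort]
  have hl1 : j1 < (S.sort (· ≤ ·)).length := lt_trans (by omega) hl2
  rw [nthF, nthF, List.getD_eq_getElem _ _ hl1, List.getD_eq_getElem _ _ hl2]
  exact List.pairwise_iff_getElem.1 (S.sortedLT_sort.pairwise) j1 j2 hl1 hl2 h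

lemma nthF_injOn {n : ℕ} {S : Finset (Fin n)} {d : Fin n} {j1 j2 : ℕ}
    (h1 : j1 < S.card) (h2 : j2 < S.card) (h : nthF S d j1 = nthF S d j2) : j1 = j2 := by
  rcases lt_trichotomy j1 j2 with hlt | heq | hgt
  · exact absurd h (ne_of_lt (nthF_strictMono hlt h2))
  · exact heq
  · exact absurd h.symm (ne_of_lt (nthF_strictMono hgt h1))

lemma nthF_surj {n : ℕ} {S : Finset (Fin n)} {d : Fin n} {a : Fin n} (ha : a ∈ S) :
    ∃ j, j < S.card ∧ nthF S d j = a := by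
  have : a ∈ S.sort (· ≤ ·) := (Finset.mem_sort _).2 ha
  obtain ⟨j, hj, hja⟩ := List.getElem_of_mem this
  exact ⟨j, by rwa [Finset.length_sort] at hj,
    by rw [nthF, List.getD_eq_getElem _ _ hj, hja]⟩

/-- The word of the permutation of `Fin (n+1)` associated to `(k, S, σ)`:
complement of `S` in increasing order, then the top element, then `S` permuted by `σ`. -/
def wordF (n : ℕ) (d : Fin n) (x : Σ k : ℕ, Finset (Fin n) × Equiv.Perm (Fin k))
    (p : Fin (n + 1)) : Fin (n + 1) :=
  if p.val < n - x.1 then (nthF x.2.1ᶜ d p.val).castSucc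
  else if p.val = n - x.1 then Fin.last n
  else (nthF x.2.1 d (if h2 : p.val - (n - x.1) - 1 < x.1 then
    (x.2.2 ⟨p.val - (n - x.1) - 1, h2⟩ : Fin x.1).val else 0)).castSucc

lemma card_compl_eq {n k : ℕ} {S : Finset (Fin n)} (hS : S.card = k) :
    Sᶜ.card = n - k := by
  rw [Finset.card_compl, hS, Fintype.card_fin]

lemma wordF_eq₁ {n k : ℕ} {d : Fin n} {S : Finset (Fin n)} {σ : Equiv.Perm (Fin k)}
    {p : Fin (n + 1)} (hp : p.val < n - k) :
    wordF n d ⟨k, (S, σ)⟩ p = (nthF Sᶜ d p.val).castSucc := by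
  simp only [wordF, if_pos hp]

lemma wordF_eq₂ {n k : ℕ} {d : Fin n} {S : Finset (Fin n)} {σ : Equiv.Perm (Fin k)}
    {p : Fin (n + 1)} (hp : p.val = n - k) :
    wordF n d ⟨k, (S, σ)⟩ p = Fin.last n := by
  simp only [wordF]
  rw [if_neg (by omega), if_pos hp]

lemma wordF_eq₃ {n k : ℕ} {d : Fin n} {S : Finset (Fin n)} {σ : Equiv.Perm (Fin k)}
    {p : Fin (n + 1)} (hp : n - k < p.val) (hkn : k ≤ n) :
    ∃ h2 : p.val - (n - k) - 1 < k,
      wordF n d ⟨k, (S, σ)⟩ p = (nthF S d (σ ⟨p.val - (n - k) - 1, h2⟩).val).castSucc := by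
  have hpn : p.val ≤ n := Nat.lt_succ_iff.1 p.isLt
  have h2 : p.val - (n - k) - 1 < k := by omega
  refine ⟨h2, ?_⟩
  simp only [wordF]
  rw [if_neg (by omega), if_neg (by omega), dif_pos h2]

lemma wordF_inj {n k : ℕ} {d : Fin n} {S : Finset (Fin n)} {σ : Equiv.Perm (Fin k)}
    (hS : S.card = k) (hkn : k ≤ n) :
    Function.Injective (wordF n d ⟨k, (S, σ)⟩) := by
  have hcc : Sᶜ.card = n - k := card_compl_eq hS
  intro p q h
  have hpn : p.val ≤ n := Nat.lt_succ_iff.1 p.isLt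
  have hqn : q.val ≤ n := Nat.lt_succ_iff.1 q.isLt
  have key : ∀ p q : Fin (n + 1), wordF n d ⟨k, (S, σ)⟩ p = wordF n d ⟨k, (S, σ)⟩ q →
      p.val < n - k → q.val < n - k → p = q := by
    intro p q h hp hq
    rw [wordF_eq₁ hp, wordF_eq₁ hq] at h
    have := nthF_injOn (d := d) (by omega : p.val < Sᶜ.card) (by omega : q.val < Sᶜ.card)
      (Fin.castSucc_injective _ h)
    exact Fin.ext this
  have key2 : ∀ p q : Fin (n + 1), wordF n d ⟨k, (S, σ)⟩ p = wordF n d ⟨k, (S, σ)⟩ q →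
      p.val < n - k → ¬ (q.val = n - k) → n - k ≤ q.val → False := by
    intro p q h hp hq2 hq3
    rw [wordF_eq₁ hp] at h
    obtain ⟨h2, he⟩ := wordF_eq₃ (σ := σ) (d := d) (by omega : n - k < q.val) hkn
    rw [he] at h
    have hmem₁ : nthF Sᶜ d p.val ∈ Sᶜ := nthF_mem (by omega)
    have hmem₂ : nthF S d (σ ⟨q.val - (n - k) - 1, h2⟩).val ∈ S := by
      refine nthF_mem (by rw [hS]; exact (σ _).isLt)
    rw [Fin.castSucc_injective _ h] at hmem₁
    exact (Finset.mem_compl.1 hmem₁) hmem₂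
  have keyL : ∀ p : Fin (n + 1), p.val ≠ n - k → wordF n d ⟨k, (S, σ)⟩ p ≠ Fin.last n := by
    intro p hp
    rcases lt_or_gt_of_ne hp with h1 | h1
    · rw [wordF_eq₁ h1]; exact (Fin.castSucc_lt_last _).ne
    · obtain ⟨h2, he⟩ := wordF_eq₃ (σ := σ) (d := d) h1 hkn
      rw [he]; exact (Fin.castSucc_lt_last _).ne
  rcases lt_trichotomy p.val (n - k) with hp | hp | hp
  · rcases lt_trichotomy q.val (n - k) with hq | hq | hq
    · exact key p q h hp hq
    · exact absurd (h.trans (wordF_eq₂ hq)) (keyL p (by omega))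
    · exact (key2 p q h hp (by omega) (by omega)).elim
  · rcases eq_or_ne q.val (n - k) with hq | hq
    · exact Fin.ext (hp.trans hq.symm)
    · exact absurd ((wordF_eq₂ hp).symm.trans h) (Ne.symm (keyL q hq))
  · rcases lt_trichotomy q.val (n - k) with hq | hq | hq
    · exact (key2 q p h.symm hq (by omega) (by omega)).elim
    · exact absurd (h.trans (wordF_eq₂ hq)) (keyL p (by omega))
    · obtain ⟨h2p, hep⟩ := wordF_eq₃ (σ := σ) (d := d) hp hkn
      obtain ⟨h2q, heq⟩ := wordF_eq₃ (σ := σ) (d := d) hq hkn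
      rw [hep, heq] at h
      have h3 := nthF_injOn (d := d) (by rw [hS]; exact (σ _).isLt)
        (by rw [hS]; exact (σ _).isLt) (Fin.castSucc_injective _ h)
      have h4 : σ ⟨p.val - (n - k) - 1, h2p⟩ = σ ⟨q.val - (n - k) - 1, h2q⟩ :=
        Fin.ext h3
      have h5 := σ.injective h4
      have h6 : p.val - (n - k) - 1 = q.val - (n - k) - 1 := congrArg Fin.val h5
      exact Fin.ext (by omega)

lemma nthF_lt_iff {n : ℕ} {S : Finset (Fin n)} {d : Fin n} {a b : ℕ}
    (ha : a < S.card) (hb : b < S.card) : nthF S d a < nthF S d b ↔ a < b := by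
  constructor
  · intro h
    by_contra hab
    rcases eq_or_lt_of_le (not_lt.1 hab) with he | hlt
    · rw [he] at h; exact lt_irrefl _ h
    · exact (nthF_strictMono hlt ha).asymm h
  · intro h; exact nthF_strictMono h hb

/-- The permutation associated to `(k, S, σ)`. -/
noncomputable def stPerm (n : ℕ) (d : Fin n)
    (x : Σ k : ℕ, Finset (Fin n) × Equiv.Perm (Fin k)) : Equiv.Perm (Fin (n + 1)) :=
  if h : Function.Bijective (wordF n d x) then Equiv.ofBijective _ h else 1

lemma stPerm_apply {n k : ℕ} {d : Fin n} {S : Finset (Fin n)} {σ : Equiv.Perm (Fin k)}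
    (hS : S.card = k) (hkn : k ≤ n) (p : Fin (n + 1)) :
    stPerm n d ⟨k, (S, σ)⟩ p = wordF n d ⟨k, (S, σ)⟩ p := by
  have hb : Function.Bijective (wordF n d ⟨k, (S, σ)⟩) :=
    Finite.injective_iff_bijective.1 (wordF_inj hS hkn)
  rw [stPerm, dif_pos hb]; rfl

lemma stPerm_numDescents {n k : ℕ} {d : Fin n} {S : Finset (Fin n)} {σ : Equiv.Perm (Fin k)}
    (hS : S.card = k) (hk1 : 1 ≤ k) (hkn : k ≤ n) :
    numDescents (n + 1) (stPerm n d ⟨k, (S, σ)⟩) = numDescents k σ + 1 := by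
  have hcc : Sᶜ.card = n - k := card_compl_eq hS
  have happ := stPerm_apply (σ := σ) (d := d) hS hkn
  unfold numDescents
  have hset : ((Finset.range (n + 1)).filter fun p =>
      ∃ h : p + 1 < n + 1, stPerm n d ⟨k, (S, σ)⟩ ⟨p + 1, h⟩ <
        stPerm n d ⟨k, (S, σ)⟩ ⟨p, Nat.lt_of_succ_lt h⟩) =
      insert (n - k) (((Finset.range k).filter fun j =>
        ∃ h : j + 1 < k, σ ⟨j + 1, h⟩ < σ ⟨j, Nat.lt_of_succ_lt h⟩).image
          fun j => j + (n - k + 1)) := by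
    ext p
    simp only [Finset.mem_filter, Finset.mem_range, Finset.mem_insert, Finset.mem_image]
    constructor
    · rintro ⟨hpr, h1, hlt⟩
      rw [happ, happ] at hlt
      rcases lt_trichotomy p (n - k) with hp | hp | hp
      · exfalso
        rcases eq_or_lt_of_le (Nat.succ_le_of_lt hp) with he | hlt2
        · rw [wordF_eq₁ (show (⟨p, Nat.lt_of_succ_lt h1⟩ : Fin (n+1)).val < n - k from hp),
            wordF_eq₂ (show (⟨p + 1, h1⟩ : Fin (n+1)).val = n - k from he)] at hlt
          exact (Fin.castSucc_lt_last _).asymm hlt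
        · rw [wordF_eq₁ (show (⟨p, Nat.lt_of_succ_lt h1⟩ : Fin (n+1)).val < n - k from hp),
            wordF_eq₁ (show (⟨p + 1, h1⟩ : Fin (n+1)).val < n - k from hlt2)] at hlt
          rw [Fin.castSucc_lt_castSucc_iff] at hlt
          have := nthF_strictMono (d := d) (S := Sᶜ) (Nat.lt_succ_self p) (by omega)
          exact this.asymm hlt
      · exact Or.inl hp
      · right
        have hpn : p < n := by omega
        obtain ⟨h2, he⟩ := wordF_eq₃ (σ := σ) (d := d)
          (show n - k < (⟨p, Nat.lt_of_succ_lt h1⟩ : Fin (n+1)).val from hp) hkn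
        obtain ⟨h2', he'⟩ := wordF_eq₃ (σ := σ) (d := d)
          (show n - k < (⟨p + 1, h1⟩ : Fin (n+1)).val by simpa using by omega) hkn
        rw [he, he'] at hlt
        rw [Fin.castSucc_lt_castSucc_iff,
          nthF_lt_iff (by rw [hS]; exact (σ _).isLt) (by rw [hS]; exact (σ _).isLt)] at hlt
        refine ⟨p - (n - k) - 1, ⟨by omega, ?_⟩, by omega⟩
        have hjk : p - (n - k) - 1 + 1 < k := by omega
        refine ⟨hjk, ?_⟩
        have e1 : σ ⟨p - (n - k) - 1 + 1, hjk⟩ = σ ⟨p + 1 - (n - k) - 1, h2'⟩ :=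
          congrArg σ (Fin.ext (by simp; omega))
        have e2 : σ ⟨p - (n - k) - 1, Nat.lt_of_succ_lt hjk⟩ = σ ⟨p - (n - k) - 1, h2⟩ := rfl
        rw [e1, e2]
        exact hlt
    · intro hmem
      rcases hmem with hp | ⟨j, ⟨hjr, hjk, hQ⟩, hpj⟩
      · subst hp
        have h1 : n - k + 1 < n + 1 := by omega
        refine ⟨by omega, h1, ?_⟩
        rw [happ, happ]
        rw [wordF_eq₂ (show (⟨n - k, Nat.lt_of_succ_lt h1⟩ : Fin (n+1)).val = n - k from rfl)]
        obtain ⟨h2, he⟩ := wordF_eq₃ (σ := σ) (d := d)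
          (show n - k < (⟨n - k + 1, h1⟩ : Fin (n+1)).val from Nat.lt_succ_self _) hkn
        rw [he]
        exact Fin.castSucc_lt_last _
      · subst hpj
        have hpn : j + (n - k + 1) < n := by omega
        have h1 : j + (n - k + 1) + 1 < n + 1 := by omega
        refine ⟨by omega, h1, ?_⟩
        rw [happ, happ]
        obtain ⟨h2, he⟩ := wordF_eq₃ (σ := σ) (d := d)
          (show n - k < (⟨j + (n - k + 1), Nat.lt_of_succ_lt h1⟩ : Fin (n+1)).val by
            simp; omega) hkn
        obtain ⟨h2', he'⟩ := wordF_eq₃ (σ := σ) (d := d)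
          (show n - k < (⟨j + (n - k + 1) + 1, h1⟩ : Fin (n+1)).val by simp; omega) hkn
        rw [he, he']
        rw [Fin.castSucc_lt_castSucc_iff,
          nthF_lt_iff (by rw [hS]; exact (σ _).isLt) (by rw [hS]; exact (σ _).isLt)]
        have e1 : σ ⟨j + (n - k + 1) + 1 - (n - k) - 1, h2'⟩ = σ ⟨j + 1, hjk⟩ :=
          congrArg σ (Fin.ext (by simp; omega))
        have e2 : σ ⟨j + (n - k + 1) - (n - k) - 1, h2⟩ = σ ⟨j, Nat.lt_of_succ_lt hjk⟩ :=
          congrArg σ (Fin.ext (by simp; omega))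
        rw [e1, e2]
        exact hQ
  rw [hset]
  rw [Finset.card_insert_of_notMem (by
    simp only [Finset.mem_image, Finset.mem_filter, Finset.mem_range, not_exists]
    rintro j ⟨⟨hjr, _⟩⟩
    omega)]
  rw [Finset.card_image_of_injective _ (add_left_injective _)]


lemma wordF_ne_last {n k : ℕ} {d : Fin n} {S : Finset (Fin n)} {σ : Equiv.Perm (Fin k)}
    (hkn : k ≤ n) {p : Fin (n + 1)} (hp : p.val ≠ n - k) :
    wordF n d ⟨k, (S, σ)⟩ p ≠ Fin.last n := by
  rcases lt_or_gt_of_ne hp with h1 | h1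
  · rw [wordF_eq₁ h1]; exact (Fin.castSucc_lt_last _).ne
  · obtain ⟨h2, he⟩ := wordF_eq₃ (σ := σ) (d := d) h1 hkn
    rw [he]; exact (Fin.castSucc_lt_last _).ne

lemma wordF_mem_iff {n k : ℕ} {d : Fin n} {S : Finset (Fin n)} {σ : Equiv.Perm (Fin k)}
    (hS : S.card = k) (hkn : k ≤ n) (a : Fin n) :
    a ∈ S ↔ ∃ p : Fin (n + 1), n - k < p.val ∧ wordF n d ⟨k, (S, σ)⟩ p = a.castSucc := by
  constructor
  · intro ha
    obtain ⟨j, hj, hja⟩ := nthF_surj (d := d) ha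
    rw [hS] at hj
    obtain ⟨j', hj'⟩ := σ.surjective ⟨j, hj⟩
    have hlt : n - k + 1 + j'.val < n + 1 := by have := j'.isLt; omega
    refine ⟨⟨n - k + 1 + j'.val, hlt⟩, by simp; omega, ?_⟩
    obtain ⟨h2, he⟩ := wordF_eq₃ (σ := σ) (d := d)
      (show n - k < (⟨n - k + 1 + j'.val, hlt⟩ : Fin (n+1)).val by simp; omega) hkn
    rw [he]
    have e1 : (⟨(⟨n - k + 1 + j'.val, hlt⟩ : Fin (n+1)).val - (n - k) - 1, h2⟩ : Fin k) = j' :=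
      Fin.ext (by simp; omega)
    rw [e1, hj', hja]
  · rintro ⟨p, hp, he⟩
    obtain ⟨h2, he'⟩ := wordF_eq₃ (σ := σ) (d := d) hp hkn
    rw [he'] at he
    have := Fin.castSucc_injective _ he
    rw [← this]
    exact nthF_mem (by rw [hS]; exact (σ _).isLt)

lemma stPerm_inj {n : ℕ} {d : Fin n} {k k' : ℕ} {S S' : Finset (Fin n)}
    {σ : Equiv.Perm (Fin k)} {σ' : Equiv.Perm (Fin k')}
    (hS : S.card = k) (hkn : k ≤ n) (hS' : S'.card = k') (hkn' : k' ≤ n)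
    (h : stPerm n d ⟨k, (S, σ)⟩ = stPerm n d ⟨k', (S', σ')⟩) :
    (⟨k, (S, σ)⟩ : Σ k : ℕ, Finset (Fin n) × Equiv.Perm (Fin k)) = ⟨k', (S', σ')⟩ := by
  have hw : ∀ p, wordF n d ⟨k, (S, σ)⟩ p = wordF n d ⟨k', (S', σ')⟩ p := by
    intro p
    rw [← stPerm_apply hS hkn p, ← stPerm_apply hS' hkn' p, h]
  -- k = k'
  have hkk : k = k' := by
    by_contra hne
    have hne' : n - k ≠ n - k' := by omega
    have h1 : wordF n d ⟨k, (S, σ)⟩ ⟨n - k, by omega⟩ = Fin.last n :=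
      wordF_eq₂ rfl
    exact wordF_ne_last (σ := σ') (d := d) hkn' hne' ((hw _).symm.trans h1)
  subst hkk
  -- S = S'
  have hSS : S = S' := by
    ext a
    rw [wordF_mem_iff (σ := σ) (d := d) hS hkn a,
      wordF_mem_iff (σ := σ') (d := d) hS' hkn a]
    constructor
    · rintro ⟨p, hp, he⟩; exact ⟨p, hp, (hw p).symm.trans he⟩
    · rintro ⟨p, hp, he⟩; exact ⟨p, hp, (hw p).trans he⟩
  subst hSS
  -- σ = σ'
  have hσ : σ = σ' := by
    ext j'
    have hp : n - k < (⟨n - k + 1 + j'.val, by have := j'.isLt; omega⟩ : Fin (n+1)).val := by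
      simp; omega
    obtain ⟨h2, he⟩ := wordF_eq₃ (σ := σ) (d := d) hp hkn
    obtain ⟨h2', he'⟩ := wordF_eq₃ (σ := σ') (d := d) hp hkn
    have := (he.symm.trans (hw _)).trans he'
    have h3 := nthF_injOn (d := d) (by rw [hS]; exact (σ _).isLt)
      (by rw [hS]; exact (σ' _).isLt) (Fin.castSucc_injective _ this)
    have e1 : (⟨(⟨n - k + 1 + j'.val, by have := j'.isLt; omega⟩ : Fin (n+1)).val - (n - k) - 1,
        h2⟩ : Fin k) = j' := Fin.ext (by simp; omega)
    have e2 : (⟨(⟨n - k + 1 + j'.val, by have := j'.isLt; omega⟩ : Fin (n+1)).val - (n - k) - 1,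
        h2'⟩ : Fin k) = j' := Fin.ext (by simp; omega)
    simp only [e1, e2] at h3
    exact h3
  subst hσ
  rfl

/-- `h_i(St^n) ≤ h_i(Pe^n)`: for `n ≥ 1` and `1 ≤ i ≤ n`,
`Σ_{k=i}^{n} binom(n,k)·A(k,i−1) ≤ A(n+1,i)`. -/
theorem stellohedron_le_permutohedron_h (n i : ℕ) (hn : 1 ≤ n) (hi1 : 1 ≤ i) (hi : i ≤ n) :
    ∑ k ∈ Finset.Icc i n, n.choose k * eulerian k (i - 1) ≤ eulerian (n + 1) i := by
  classical
  set d : Fin n := ⟨0, hn⟩ with hd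
  set D : Finset (Σ k : ℕ, Finset (Fin n) × Equiv.Perm (Fin k)) :=
    (Finset.Icc i n).sigma fun k =>
      ((Finset.univ : Finset (Fin n)).powersetCard k) ×ˢ
        ((Finset.univ : Finset (Equiv.Perm (Fin k))).filter fun σ =>
          numDescents k σ = i - 1) with hD
  have hcard : D.card = ∑ k ∈ Finset.Icc i n, n.choose k * eulerian k (i - 1) := by
    rw [hD, Finset.card_sigma]
    refine Finset.sum_congr rfl fun k _ => ?_
    rw [Finset.card_product, Finset.card_powersetCard, Finset.card_univ, Fintype.card_fin]
    rfl
  rw [← hcard, eulerian]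
  refine Finset.card_le_card_of_injOn (stPerm n d) ?_ ?_
  · rintro ⟨k, S, σ⟩ hx
    simp only [hD, Finset.mem_coe, Finset.mem_sigma, Finset.mem_Icc, Finset.mem_product,
      Finset.mem_powersetCard, Finset.mem_filter] at hx
    obtain ⟨⟨hik, hkn⟩, ⟨_, hSk⟩, _, hσ⟩ := hx
    simp only [Finset.mem_coe, Finset.mem_filter, Finset.mem_univ, true_and]
    rw [stPerm_numDescents hSk (le_trans hi1 hik) hkn, hσ]
    omega
  · rintro ⟨k, S, σ⟩ hx ⟨k', S', σ'⟩ hy hxy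
    simp only [hD, Finset.mem_coe, Finset.mem_sigma, Finset.mem_Icc, Finset.mem_product,
      Finset.mem_powersetCard, Finset.mem_filter] at hx hy
    exact stPerm_inj hx.2.1.2 hx.1.2 hy.2.1.2 hy.1.2 hxy
end
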